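/- Fix a continuous function B : [0,∞) → ℝ with B(0) = 0, parameters a ∈ ℝ, σ > 0 and an initial value Y₀ > 0. Let 0 < k₁ < k₂ and let Y₁ and Y₂ be stopped solutions with parameters k₁ and k₂ respectively (driven by the same B and starting from the same Y₀), and let τ₂ = inf{t ≥ 0 : Y₂(t) = 0}. Then Y₁(t) ≤ Y₂(t) for all t ≥ 0, and the inequality is strict for all t ∈ (0, τ₂). -/

import Mathlib

open scoped ENNReal

/-- The first zero-hitting time `τ = inf{t ≥ 0 : Y t = 0}` of a path `Y`, as an extended
nonnegative real (with `τ = ∞` if `Y` never vanishes on `[0,∞)`). -/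
noncomputable def zeroHitTime (Y : ℝ → ℝ) : ℝ≥0∞ :=
  ⨅ t ∈ {t : ℝ | 0 ≤ t ∧ Y t = 0}, ENNReal.ofReal t

/-- A stopped solution of `dY = (1/2)(k/Y − aY) dt + (σ/2) dB`, `Y 0 = Y₀`, driven by the
path `B`: a continuous function on `[0,∞)` satisfying the integral equation before its
first zero-hitting time `τ` and vanishing from `τ` onwards. -/
def IsStoppedSolution (B : ℝ → ℝ) (k a σ Y₀ : ℝ) (Y : ℝ → ℝ) : Prop :=
  ContinuousOn Y (Set.Ici 0) ∧ Y 0 = Y₀ ∧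
  (∀ t : ℝ, 0 ≤ t → ENNReal.ofReal t < zeroHitTime Y →
    Y t = Y₀ + (1 / 2) * (∫ s in (0:ℝ)..t, (k / Y s - a * Y s)) + (σ / 2) * B t) ∧
  (∀ t : ℝ, 0 ≤ t → zeroHitTime Y ≤ ENNReal.ofReal t → Y t = 0)

open Set intervalIntegral

lemma zeroHitTime_le {Y : ℝ → ℝ} {s : ℝ} (hs : 0 ≤ s) (h : Y s = 0) :
    zeroHitTime Y ≤ ENNReal.ofReal s :=
  iInf₂_le s ⟨hs, h⟩

lemma ne_zero_of_lt_zeroHitTime {Y : ℝ → ℝ} {t s : ℝ} (hs : 0 ≤ s) (hst : s ≤ t)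
    (ht : ENNReal.ofReal t < zeroHitTime Y) : Y s ≠ 0 := fun h =>
  absurd (zeroHitTime_le hs h)
    (not_le.2 ((ENNReal.ofReal_le_ofReal hst).trans_lt ht))

lemma pos_of_lt_zeroHitTime {Y : ℝ → ℝ} (hc : ContinuousOn Y (Set.Ici 0)) (h0 : 0 < Y 0)
    {t s : ℝ} (hs : 0 ≤ s) (hst : s ≤ t) (ht : ENNReal.ofReal t < zeroHitTime Y) : 0 < Y s := by
  rcases lt_trichotomy (Y s) 0 with h | h | h
  · exfalso
    have hcont : ContinuousOn Y (Icc 0 s) := hc.mono (Icc_subset_Ici_self)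
    have := intermediate_value_Icc' hs hcont (a := 0) (b := s)
    have h0mem : (0 : ℝ) ∈ Icc (Y s) (Y 0) := ⟨h.le, h0.le⟩
    obtain ⟨u, hu, hYu⟩ := this h0mem
    exact ne_zero_of_lt_zeroHitTime hu.1 (hu.2.trans hst) ht hYu
  · exact absurd h (ne_zero_of_lt_zeroHitTime hs hst ht)
  · exact h

/-- If the hitting time is finite and `≤ t`, there is a first zero `τ ∈ [0,t]`. -/
lemma exists_first_zero {Y : ℝ → ℝ} (hc : ContinuousOn Y (Set.Ici 0)) {t : ℝ} (ht0 : 0 ≤ t)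
    (h : zeroHitTime Y ≤ ENNReal.ofReal t) :
    ∃ τ, 0 ≤ τ ∧ τ ≤ t ∧ Y τ = 0 ∧ ∀ s, 0 ≤ s → s < τ → ENNReal.ofReal s < zeroHitTime Y := by
  set S : Set ℝ := {u : ℝ | 0 ≤ u ∧ Y u = 0} with hS
  have hSne : S.Nonempty := by
    by_contra hemp
    rw [not_nonempty_iff_eq_empty] at hemp
    have : zeroHitTime Y = ⊤ := by
      simp [zeroHitTime, ← hS, hemp]
    rw [this] at h
    exact absurd h (by simp [ENNReal.ofReal_lt_top.ne])
  have hSclosed : IsClosed S := by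
    have : S = Ici 0 ∩ Y ⁻¹' {0} := by
      ext u; simp [hS, Set.mem_setOf_eq, and_comm]
    rw [this]
    exact hc.preimage_isClosed_of_isClosed isClosed_Ici isClosed_singleton
  have hSbdd : BddBelow S := ⟨0, fun u hu => hu.1⟩
  set τ := sInf S with hτ
  have hτS : τ ∈ S := hSclosed.csInf_mem hSne hSbdd
  have hτ0 : 0 ≤ τ := hτS.1
  have hτle : ENNReal.ofReal τ ≤ zeroHitTime Y :=
    le_iInf₂ fun u hu => ENNReal.ofReal_le_ofReal (csInf_le hSbdd hu)
  have hτt : τ ≤ t := by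
    have := hτle.trans h
    exact (ENNReal.ofReal_le_ofReal_iff ht0).1 this
  refine ⟨τ, hτ0, hτt, hτS.2, fun s hs hsτ => ?_⟩
  exact lt_of_lt_of_le ((ENNReal.ofReal_lt_ofReal_iff_of_nonneg hs).2 hsτ) hτle

/-- If `f 0 = 0`, `f r = ∫₀ʳ φ` with `φ` continuous, and `φ` is strictly positive wherever
`f` vanishes, then `f > 0` on `(0, t]`. -/
lemma no_crossing {f φ : ℝ → ℝ} {t : ℝ} (ht : 0 < t)
    (hfc : ContinuousOn f (Icc 0 t))
    (hφc : ContinuousOn φ (Icc 0 t))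
    (hkey : ∀ r ∈ Icc (0:ℝ) t, f r = ∫ s in (0:ℝ)..r, φ s)
    (hpos : ∀ s ∈ Icc (0:ℝ) t, f s = 0 → 0 < φ s) :
    ∀ r ∈ Ioc (0:ℝ) t, 0 < f r := by
  have hint : ∀ a b : ℝ, 0 ≤ a → a ≤ b → b ≤ t → IntervalIntegrable φ MeasureTheory.volume a b := by
    intro a b ha hab hbt
    apply ContinuousOn.intervalIntegrable
    rw [uIcc_of_le hab]
    exact hφc.mono (Icc_subset_Icc ha hbt)
  by_contra hcon
  push_neg at hcon
  obtain ⟨r₀, hr₀, hfr₀⟩ := hcon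
  set Z : Set ℝ := {s : ℝ | s ∈ Ioc (0:ℝ) r₀ ∧ f s ≤ 0} with hZ
  have hr₀Z : r₀ ∈ Z := ⟨⟨hr₀.1, le_refl _⟩, hfr₀⟩
  have hZne : Z.Nonempty := ⟨r₀, hr₀Z⟩
  have hZbdd : BddBelow Z := ⟨0, fun z hz => hz.1.1.le⟩
  set τ := sInf Z with hτdef
  have hτ0 : 0 ≤ τ := le_csInf hZne fun z hz => hz.1.1.le
  have hτr₀ : τ ≤ r₀ := csInf_le hZbdd hr₀Z
  have hτmem : τ ∈ Icc (0:ℝ) t := ⟨hτ0, hτr₀.trans hr₀.2⟩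
  have hbelow : ∀ s, 0 < s → s < τ → 0 < f s := by
    intro s hs hsτ
    by_contra hle
    push_neg at hle
    have : s ∈ Z := ⟨⟨hs, hsτ.le.trans hτr₀⟩, hle⟩
    exact absurd (csInf_le hZbdd this) (not_le.2 hsτ)
  have hfτ_le : f τ ≤ 0 := by
    by_contra hgt
    push_neg at hgt
    have hev : f ⁻¹' Ioi 0 ∈ nhdsWithin τ (Icc (0:ℝ) t) :=
      (hfc τ hτmem) (Ioi_mem_nhds hgt)
    rcases Metric.mem_nhdsWithin_iff.1 hev with ⟨ε, hε, hball⟩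
    obtain ⟨z, hzZ, hzlt⟩ := exists_lt_of_csInf_lt hZne (show sInf Z < τ + ε by linarith)
    have hτz : τ ≤ z := csInf_le hZbdd hzZ
    have hzmem : z ∈ Icc (0:ℝ) t := ⟨hzZ.1.1.le, hzZ.1.2.trans hr₀.2⟩
    have : z ∈ Metric.ball τ ε := by
      rw [Metric.mem_ball, Real.dist_eq, abs_of_nonneg (by linarith)]
      linarith
    have := hball ⟨this, hzmem⟩
    simp only [mem_preimage, mem_Ioi] at this
    linarith [hzZ.2]
  have hfτ_ge : 0 ≤ f τ := by
    rcases eq_or_lt_of_le hτ0 with h0 | h0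
    · rw [← h0, hkey 0 ⟨le_refl _, ht.le⟩, intervalIntegral.integral_same]
    · have hne : (nhdsWithin τ (Ioo (0:ℝ) τ)).NeBot := right_nhdsWithin_Ioo_neBot h0
      have htend : Filter.Tendsto f (nhdsWithin τ (Ioo (0:ℝ) τ)) (nhds (f τ)) :=
        (hfc τ hτmem).mono (fun x hx => ⟨hx.1.le, hx.2.le.trans hτmem.2⟩)
      refine ge_of_tendsto htend ?_
      filter_upwards [self_mem_nhdsWithin] with s hs
      exact (hbelow s hs.1 hs.2).le
  have hfτ : f τ = 0 := le_antisymm hfτ_le hfτ_ge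
  have hφτ : 0 < φ τ := hpos τ hτmem hfτ
  have hev : φ ⁻¹' Ioi 0 ∈ nhdsWithin τ (Icc (0:ℝ) t) := (hφc τ hτmem) (Ioi_mem_nhds hφτ)
  rcases Metric.mem_nhdsWithin_iff.1 hev with ⟨ε, hε, hball⟩
  have hφball : ∀ x ∈ Icc (0:ℝ) t, |x - τ| < ε → 0 < φ x := by
    intro x hx hxd
    have : x ∈ Metric.ball τ ε := by rw [Metric.mem_ball, Real.dist_eq]; exact hxd
    have := hball ⟨this, hx⟩
    simpa using this
  rcases eq_or_lt_of_le hτ0 with h0 | h0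
  · obtain ⟨z, hzZ, hzlt⟩ := exists_lt_of_csInf_lt hZne (show sInf Z < τ + ε by linarith)
    have hz0 : 0 < z := hzZ.1.1
    have hzt : z ≤ t := hzZ.1.2.trans hr₀.2
    have hfz : 0 < f z := by
      rw [hkey z ⟨hz0.le, hzt⟩]
      refine intervalIntegral_pos_of_pos_on (hint 0 z (le_refl _) hz0.le hzt) ?_ hz0
      intro x hx
      refine hφball x ⟨hx.1.le, hx.2.le.trans hzt⟩ ?_
      rw [← h0, sub_zero, abs_of_nonneg hx.1.le]
      calc x < z := hx.2
        _ < τ + ε := hzlt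
        _ = ε := by rw [← h0, zero_add]
    linarith [hzZ.2]
  · set s := max (τ/2) (τ - ε/2) with hs
    have hs0 : 0 < s := lt_max_of_lt_left (by linarith)
    have hsτ : s < τ := max_lt (by linarith) (by linarith)
    have hsε : τ - s < ε := by
      have : τ - ε/2 ≤ s := le_max_right _ _
      linarith
    have hst : s ≤ t := hsτ.le.trans hτmem.2
    have hfs : 0 < f s := hbelow s hs0 hsτ
    have hsub : f τ - f s = ∫ x in s..τ, φ x := by
      rw [hkey τ hτmem, hkey s ⟨hs0.le, hst⟩]
      exact integral_interval_sub_left (hint 0 τ (le_refl _) hτ0 hτmem.2)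
        (hint 0 s (le_refl _) hs0.le hst)
    have hintpos : 0 < ∫ x in s..τ, φ x := by
      refine intervalIntegral_pos_of_pos_on (hint s τ hs0.le hsτ.le hτmem.2) ?_ hsτ
      intro x hx
      refine hφball x ⟨hs0.le.trans hx.1.le, hx.2.le.trans hτmem.2⟩ ?_
      rw [abs_of_nonpos (by linarith [hx.2])]
      linarith [hx.1]
    linarith [hfτ]

/-- Core comparison: strict inequality before both hitting times. -/
lemma comparison_core (B : ℝ → ℝ) (a σ Y₀ k₁ k₂ : ℝ) (hY₀ : 0 < Y₀) (hk₁ : 0 < k₁)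
    (hk : k₁ < k₂) (Y₁ Y₂ : ℝ → ℝ)
    (h₁ : IsStoppedSolution B k₁ a σ Y₀ Y₁) (h₂ : IsStoppedSolution B k₂ a σ Y₀ Y₂) :
    ∀ t : ℝ, 0 < t → ENNReal.ofReal t < zeroHitTime Y₁ →
      ENNReal.ofReal t < zeroHitTime Y₂ → Y₁ t < Y₂ t := by
  intro t ht hτ₁ hτ₂
  have h₁0 : 0 < Y₁ 0 := by rw [h₁.2.1]; exact hY₀
  have h₂0 : 0 < Y₂ 0 := by rw [h₂.2.1]; exact hY₀
  have hsub : Icc (0:ℝ) t ⊆ Ici 0 := Icc_subset_Ici_self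
  have hY₁pos : ∀ s ∈ Icc (0:ℝ) t, 0 < Y₁ s := fun s hs =>
    pos_of_lt_zeroHitTime h₁.1 h₁0 hs.1 hs.2 hτ₁
  have hY₂pos : ∀ s ∈ Icc (0:ℝ) t, 0 < Y₂ s := fun s hs =>
    pos_of_lt_zeroHitTime h₂.1 h₂0 hs.1 hs.2 hτ₂
  have hG₁c : ContinuousOn (fun s => k₁ / Y₁ s - a * Y₁ s) (Icc 0 t) :=
    (continuousOn_const.div (h₁.1.mono hsub) fun s hs => (hY₁pos s hs).ne').sub
      (continuousOn_const.mul (h₁.1.mono hsub))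
  have hG₂c : ContinuousOn (fun s => k₂ / Y₂ s - a * Y₂ s) (Icc 0 t) :=
    (continuousOn_const.div (h₂.1.mono hsub) fun s hs => (hY₂pos s hs).ne').sub
      (continuousOn_const.mul (h₂.1.mono hsub))
  set φ : ℝ → ℝ :=
    fun s => (1/2) * ((k₂ / Y₂ s - a * Y₂ s) - (k₁ / Y₁ s - a * Y₁ s)) with hφdef
  have hφc : ContinuousOn φ (Icc 0 t) := continuousOn_const.mul (hG₂c.sub hG₁c)
  have hfc : ContinuousOn (fun r => Y₂ r - Y₁ r) (Icc 0 t) :=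
    (h₂.1.mono hsub).sub (h₁.1.mono hsub)
  have hkey : ∀ r ∈ Icc (0:ℝ) t, Y₂ r - Y₁ r = ∫ s in (0:ℝ)..r, φ s := by
    intro r hr
    have hr₁ : ENNReal.ofReal r < zeroHitTime Y₁ :=
      (ENNReal.ofReal_le_ofReal hr.2).trans_lt hτ₁
    have hr₂ : ENNReal.ofReal r < zeroHitTime Y₂ :=
      (ENNReal.ofReal_le_ofReal hr.2).trans_lt hτ₂
    have e₁ := h₁.2.2.1 r hr.1 hr₁
    have e₂ := h₂.2.2.1 r hr.1 hr₂
    have hi₁ : IntervalIntegrable (fun s => k₁ / Y₁ s - a * Y₁ s) MeasureTheory.volume 0 r := by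
      apply ContinuousOn.intervalIntegrable
      rw [uIcc_of_le hr.1]
      exact hG₁c.mono (Icc_subset_Icc le_rfl hr.2)
    have hi₂ : IntervalIntegrable (fun s => k₂ / Y₂ s - a * Y₂ s) MeasureTheory.volume 0 r := by
      apply ContinuousOn.intervalIntegrable
      rw [uIcc_of_le hr.1]
      exact hG₂c.mono (Icc_subset_Icc le_rfl hr.2)
    have : (∫ s in (0:ℝ)..r, φ s)
        = (1/2) * ((∫ s in (0:ℝ)..r, (k₂ / Y₂ s - a * Y₂ s))
          - ∫ s in (0:ℝ)..r, (k₁ / Y₁ s - a * Y₁ s)) := by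
      rw [hφdef, intervalIntegral.integral_const_mul, intervalIntegral.integral_sub hi₂ hi₁]
    rw [this, e₁, e₂]
    ring
  have hpos : ∀ s ∈ Icc (0:ℝ) t, Y₂ s - Y₁ s = 0 → 0 < φ s := by
    intro s hs h
    have hY : Y₁ s = Y₂ s := by linarith
    have hY₂ := hY₂pos s hs
    have : φ s = (k₂ - k₁) / (2 * Y₂ s) := by
      rw [hφdef]
      simp only [hY]
      field_simp
      ring
    rw [this]
    exact div_pos (by linarith) (by linarith)
  have := no_crossing ht hfc hφc hkey hpos t ⟨ht, le_refl _⟩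
  linarith

/-- comparison of trajectories: for two stopped solutions driven by the
same path and started at the same `Y₀ > 0`, with parameters `0 < k₁ < k₂`, one has
`Y₁ t ≤ Y₂ t` for all `t ≥ 0`, with strict inequality on `(0, τ₂)`. -/
theorem fCIR_trajectory_comparison (B : ℝ → ℝ) (hBcont : Continuous B) (hB0 : B 0 = 0)
    (a σ Y₀ k₁ k₂ : ℝ) (hσ : 0 < σ) (hY₀ : 0 < Y₀) (hk₁ : 0 < k₁) (hk : k₁ < k₂)
    (Y₁ Y₂ : ℝ → ℝ)
    (h₁ : IsStoppedSolution B k₁ a σ Y₀ Y₁) (h₂ : IsStoppedSolution B k₂ a σ Y₀ Y₂) :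
    (∀ t : ℝ, 0 ≤ t → Y₁ t ≤ Y₂ t) ∧
    (∀ t : ℝ, 0 < t → ENNReal.ofReal t < zeroHitTime Y₂ → Y₁ t < Y₂ t) := by
  have h₁0 : 0 < Y₁ 0 := by rw [h₁.2.1]; exact hY₀
  have h₂0 : 0 < Y₂ 0 := by rw [h₂.2.1]; exact hY₀
  have hcore := comparison_core B a σ Y₀ k₁ k₂ hY₀ hk₁ hk Y₁ Y₂ h₁ h₂
  have hstrict : ∀ t : ℝ, 0 < t → ENNReal.ofReal t < zeroHitTime Y₂ → Y₁ t < Y₂ t := by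
    intro t ht hτ₂
    by_cases hτ₁ : ENNReal.ofReal t < zeroHitTime Y₁
    · exact hcore t ht hτ₁ hτ₂
    · push_neg at hτ₁
      have hY₁0 : Y₁ t = 0 := h₁.2.2.2 t ht.le hτ₁
      have hY₂pos : 0 < Y₂ t := pos_of_lt_zeroHitTime h₂.1 h₂0 ht.le le_rfl hτ₂
      rw [hY₁0]; exact hY₂pos
  refine ⟨?_, hstrict⟩
  intro t ht0
  rcases eq_or_lt_of_le ht0 with h0 | h0
  · rw [← h0, h₁.2.1, h₂.2.1]
  · by_cases hτ₂ : ENNReal.ofReal t < zeroHitTime Y₂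
    · exact (hstrict t h0 hτ₂).le
    · push_neg at hτ₂
      have hY₂0 : Y₂ t = 0 := h₂.2.2.2 t ht0 hτ₂
      by_cases hτ₁ : zeroHitTime Y₁ ≤ ENNReal.ofReal t
      · rw [hY₂0, h₁.2.2.2 t ht0 hτ₁]
      · exfalso
        push_neg at hτ₁
        obtain ⟨τ, hτ0, hτt, hYτ, hbefore⟩ := exists_first_zero h₂.1 ht0 hτ₂
        have hτpos : 0 < τ := by
          rcases eq_or_lt_of_le hτ0 with h | h
          · exfalso; rw [← h] at hYτ; rw [hYτ] at h₂0; exact lt_irrefl 0 h₂0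
          · exact h
        have hlt : ∀ s ∈ Ioo (0:ℝ) τ, Y₁ s ≤ Y₂ s := by
          intro s hs
          have hs₁ : ENNReal.ofReal s < zeroHitTime Y₁ :=
            (ENNReal.ofReal_le_ofReal ((hs.2.le.trans hτt))).trans_lt hτ₁
          exact (hcore s hs.1 hs₁ (hbefore s hs.1.le hs.2)).le
        have hne : (nhdsWithin τ (Ioo (0:ℝ) τ)).NeBot := right_nhdsWithin_Ioo_neBot hτpos
        have hsubIci : Ioo (0:ℝ) τ ⊆ Ici 0 := fun x hx => hx.1.le
        have htd₁ : Filter.Tendsto Y₁ (nhdsWithin τ (Ioo (0:ℝ) τ)) (nhds (Y₁ τ)) :=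
          (h₁.1 τ hτ0).mono hsubIci
        have htd₂ : Filter.Tendsto Y₂ (nhdsWithin τ (Ioo (0:ℝ) τ)) (nhds (Y₂ τ)) :=
          (h₂.1 τ hτ0).mono hsubIci
        have hle : Y₁ τ ≤ Y₂ τ := by
          refine le_of_tendsto_of_tendsto htd₁ htd₂ ?_
          filter_upwards [self_mem_nhdsWithin] with s hs
          exact hlt s hs
        have hY₁τpos : 0 < Y₁ τ := pos_of_lt_zeroHitTime h₁.1 h₁0 hτ0 hτt hτ₁
        rw [hYτ] at hle
        linarith
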